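/- Let M be a connected Hausdorff topological manifold of dimension d ≥ 2 (a connected Hausdorff topological space locally homeomorphic to ℝᵈ). Then for every n ≥ 1 the set {x : Fin n → M | x is injective}, viewed as a subspace of the product Mⁿ, is connected. -/

import Mathlib

open Set Metric

theorem ball_diff_countable_isConnected (d : ℕ) (hd : 2 ≤ d)
    (c : EuclideanSpace ℝ (Fin d)) {r : ℝ} (hr : 0 < r)
    {T : Set (EuclideanSpace ℝ (Fin d))} (hT : T.Countable) :
    IsConnected (ball c r \ T) := by
  have hrank : 1 < Module.rank ℝ (EuclideanSpace ℝ (Fin d)) := by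
    rw [← Module.finrank_eq_rank]
    norm_cast
    rw [finrank_euclideanSpace_fin]
    omega
  set f := OpenPartialHomeomorph.univBall c r with hf
  have hsrc : f.source = univ := OpenPartialHomeomorph.univBall_source c r
  have hinj : Function.Injective f := fun a b h =>
    f.injOn (by simp [hsrc]) (by simp [hsrc]) h
  have hcont : Continuous f := by
    have := f.continuousOn
    rw [hsrc] at this
    exact continuousOn_univ.1 this
  have h1 : IsPathConnected ((f ⁻¹' T)ᶜ) :=
    (hT.preimage hinj).isPathConnected_compl_of_one_lt_rank hrank
  have h2 : IsPathConnected (f '' (f ⁻¹' T)ᶜ) := h1.image hcont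
  have himg : f '' (f ⁻¹' T)ᶜ = ball c r \ T := by
    rw [← preimage_compl, Set.image_preimage_eq_inter_range]
    have hrg : range f = ball c r := by
      rw [← Set.image_univ, ← hsrc, f.image_source_eq_target,
        OpenPartialHomeomorph.univBall_target c hr]
    rw [hrg, inter_comm, diff_eq]
  rw [himg] at h2
  exact h2.isConnected

theorem punctured_nbhd (d : ℕ) (hd : 2 ≤ d) (M : Type*) [TopologicalSpace M] [T2Space M]
    [ChartedSpace (EuclideanSpace ℝ (Fin d)) M] {S : Set M} (hS : S.Finite)
    (s : M) {O : Set M} (hO : O ∈ nhds s) :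
    ∃ W ∈ nhds s, W ⊆ O ∧ IsConnected (W \ S) := by
  set e := chartAt (EuclideanSpace ℝ (Fin d)) s with he
  have hsrc : s ∈ e.source := mem_chart_source _ s
  set O' : Set M := interior O ∩ e.source with hO'
  have hO'open : IsOpen O' := isOpen_interior.inter e.open_source
  have hsO' : s ∈ O' := ⟨mem_interior_iff_mem_nhds.2 hO, hsrc⟩
  have hO'src : O' ⊆ e.source := inter_subset_right
  have hVopen : IsOpen (e '' O') := e.isOpen_image_of_subset_source hO'open hO'src
  have hVtgt : e '' O' ⊆ e.target := by
    intro y ⟨x, hx, hxy⟩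
    exact hxy ▸ e.map_source (hO'src hx)
  obtain ⟨r, hr, hball⟩ := Metric.isOpen_iff.1 hVopen (e s) ⟨s, hsO', rfl⟩
  have hballtgt : ball (e s) r ⊆ e.target := hball.trans hVtgt
  set T : Set (EuclideanSpace ℝ (Fin d)) := e '' (S ∩ e.source) with hT
  set W : Set M := e.symm '' (ball (e s) r) with hW
  refine ⟨W, ?_, ?_, ?_⟩
  · rw [hW, e.symm_image_eq_source_inter_preimage hballtgt]
    exact (e.isOpen_inter_preimage isOpen_ball).mem_nhds ⟨hsrc, mem_ball_self hr⟩
  · calc W ⊆ e.symm '' (e '' O') := image_mono hball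
      _ = O' := e.toPartialEquiv.symm_image_image_of_subset_source hO'src
      _ ⊆ O := inter_subset_left.trans interior_subset
  · have key : W \ S = e.symm '' (ball (e s) r \ T) := by
      ext x
      constructor
      · rintro ⟨⟨y, hy, rfl⟩, hxS⟩
        refine ⟨y, ⟨hy, ?_⟩, rfl⟩
        rintro ⟨s', ⟨hs'S, hs'src⟩, rfl⟩
        exact hxS (by rw [e.left_inv hs'src]; exact hs'S)
      · rintro ⟨y, ⟨hy, hyT⟩, rfl⟩
        refine ⟨⟨y, hy, rfl⟩, fun hxS => hyT ?_⟩
        exact ⟨e.symm y, ⟨hxS, e.map_target (hballtgt hy)⟩, e.right_inv (hballtgt hy)⟩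
    rw [key]
    have hconn : IsConnected (ball (e s) r \ T) :=
      ball_diff_countable_isConnected d hd _ hr ((hS.inter_of_left _).image _).countable
    exact hconn.image _ (e.symm.continuousOn.mono (diff_subset.trans hballtgt))

theorem compl_finite_dense (d : ℕ) (hd : 2 ≤ d) (M : Type*) [TopologicalSpace M] [T2Space M]
    [ChartedSpace (EuclideanSpace ℝ (Fin d)) M] {S : Set M} (hS : S.Finite) : Dense Sᶜ := by
  intro x
  rw [mem_closure_iff_nhds]
  intro O hO
  obtain ⟨W, hWn, hWO, hWc⟩ := punctured_nbhd d hd M hS x hO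
  obtain ⟨y, hyW, hyS⟩ := hWc.nonempty
  exact ⟨y, hWO hyW, hyS⟩

theorem compl_finite_isConnected (d : ℕ) (hd : 2 ≤ d) (M : Type*) [TopologicalSpace M]
    [T2Space M] [ConnectedSpace M]
    [ChartedSpace (EuclideanSpace ℝ (Fin d)) M] {S : Set M} (hS : S.Finite) :
    IsConnected Sᶜ := by
  have hdense := compl_finite_dense d hd M hS
  have hopen : IsOpen (Sᶜ : Set M) := hS.isClosed.isOpen_compl
  constructor
  · exact hdense.nonempty
  · intro u v hu hv hcov hAne hBne
    by_contra hcontra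
    rw [not_nonempty_iff_eq_empty] at hcontra
    set A : Set M := Sᶜ ∩ u with hA
    set B : Set M := Sᶜ ∩ v with hB
    have hAopen : IsOpen A := hopen.inter hu
    have hBopen : IsOpen B := hopen.inter hv
    have hABdisj : A ∩ B = ∅ := by
      rw [← subset_empty_iff, ← hcontra]
      rintro x ⟨⟨hx1, hx2⟩, _, hx3⟩
      exact ⟨hx1, hx2, hx3⟩
    have hABcov : A ∪ B = Sᶜ := by
      apply subset_antisymm (union_subset inter_subset_left inter_subset_left)
      intro x hx
      rcases hcov hx with h | h
      · exact Or.inl ⟨hx, h⟩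
      · exact Or.inr ⟨hx, h⟩
    have hclcov : closure A ∪ closure B = univ := by
      rw [← closure_union, hABcov]
      exact hdense.closure_eq
    have hmeet : (closure A ∩ closure B).Nonempty := by
      by_contra hmeet
      rw [not_nonempty_iff_eq_empty] at hmeet
      have hclopen : IsClopen (closure A) := by
        refine ⟨isClosed_closure, ?_⟩
        have heq : closure A = (closure B)ᶜ := by
          apply subset_antisymm
          · intro x hx hxB
            have hmem : x ∈ closure A ∩ closure B := ⟨hx, hxB⟩
            rw [hmeet] at hmem
            exact hmem
          · intro x hx
            have hx2 : x ∈ closure A ∪ closure B := by rw [hclcov]; exact mem_univ x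
            rcases hx2 with h | h
            · exact h
            · exact absurd h hx
        rw [heq]
        exact isClosed_closure.isOpen_compl
      rcases isClopen_iff.1 hclopen with h | h
      · obtain ⟨x, hx⟩ := hAne
        have hxx := subset_closure hx
        rw [h] at hxx
        exact hxx
      · obtain ⟨x, hx⟩ := hBne
        have hxB : x ∈ closure B := subset_closure hx
        have hmem : x ∈ closure A ∩ closure B := ⟨h ▸ mem_univ x, hxB⟩
        rw [hmeet] at hmem
        exact hmem
    obtain ⟨s, hsA, hsB⟩ := hmeet
    have hsnA : s ∉ A := by
      intro hs
      obtain ⟨y, hyA, hyB⟩ := mem_closure_iff_nhds.1 hsB A (hAopen.mem_nhds hs)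
      have : y ∈ A ∩ B := ⟨hyA, hyB⟩
      rw [hABdisj] at this
      exact this
    have hsnB : s ∉ B := by
      intro hs
      obtain ⟨y, hyB, hyA⟩ := mem_closure_iff_nhds.1 hsA B (hBopen.mem_nhds hs)
      have : y ∈ A ∩ B := ⟨hyA, hyB⟩
      rw [hABdisj] at this
      exact this
    have hsS : s ∈ S := by
      by_contra hsS
      have : s ∈ A ∪ B := by rw [hABcov]; exact hsS
      rcases this with h | h
      exacts [hsnA h, hsnB h]
    obtain ⟨W, hWn, -, hWc⟩ := punctured_nbhd d hd M hS s (Filter.univ_mem)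
    have hWu : ((W \ S) ∩ u).Nonempty := by
      obtain ⟨y, hyW, hyA⟩ := mem_closure_iff_nhds.1 hsA W hWn
      exact ⟨y, ⟨hyW, fun h => hyA.1 h⟩, hyA.2⟩
    have hWv : ((W \ S) ∩ v).Nonempty := by
      obtain ⟨y, hyW, hyB⟩ := mem_closure_iff_nhds.1 hsB W hWn
      exact ⟨y, ⟨hyW, fun h => hyB.1 h⟩, hyB.2⟩
    have hWcov : W \ S ⊆ u ∪ v := fun x hx => hcov hx.2
    obtain ⟨y, hy1, hy2⟩ := hWc.isPreconnected _ _ hu hv hWcov hWu hWv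
    have : y ∈ Sᶜ ∩ (u ∩ v) := ⟨hy1.2, hy2⟩
    rw [hcontra] at this
    exact this

section Config
variable {M : Type*} [TopologicalSpace M]

/-- moving one coordinate: a preconnected set inside the configuration space -/
theorem move_one (hconn : ∀ S : Set M, S.Finite → IsConnected Sᶜ)
    {n : ℕ} {w : Fin n → M} (hw : Function.Injective w) (i : Fin n) (b : M)
    (hb : ∀ j, j ≠ i → b ≠ w j) :
    ∃ K : Set (Fin n → M), IsPreconnected K ∧
      K ⊆ {x : Fin n → M | Function.Injective x} ∧ w ∈ K ∧ Function.update w i b ∈ K := by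
  classical
  set S : Set M := w '' {j | j ≠ i} with hS
  have hSfin : S.Finite := ((finite_univ (α := Fin n)).subset (subset_univ _)).image w |>.subset
    (image_mono (subset_univ _))
  have hconnS := hconn S hSfin
  set F : M → (Fin n → M) := fun m => Function.update w i m with hF
  have hFcont : Continuous F := by
    exact continuous_const.update i continuous_id
  refine ⟨F '' Sᶜ, hconnS.isPreconnected.image F hFcont.continuousOn, ?_, ?_, ?_⟩
  · rintro y ⟨m, hm, rfl⟩
    intro j k hjk
    have hjk' : Function.update w i m j = Function.update w i m k := hjk
    by_cases hj : j = i <;> by_cases hk : k = i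
    · rw [hj, hk]
    · exfalso
      rw [hj, Function.update_self, Function.update_of_ne hk] at hjk'
      exact hm ⟨k, hk, hjk'.symm⟩
    · exfalso
      rw [hk, Function.update_self, Function.update_of_ne hj] at hjk'
      exact hm ⟨j, hj, hjk'⟩
    · rw [Function.update_of_ne hj, Function.update_of_ne hk] at hjk'
      exact hw hjk' 
  · refine ⟨w i, ?_, Function.update_eq_self i w⟩
    rintro ⟨j, hj, hjw⟩
    exact hj (hw hjw)
  · refine ⟨b, ?_, rfl⟩
    rintro ⟨j, hj, hjb⟩
    exact hb j hj hjb.symm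

/-- chain from x to z when z avoids the range of x -/
theorem chain_lemma (hconn : ∀ S : Set M, S.Finite → IsConnected Sᶜ)
    {n : ℕ} {x z : Fin n → M} (hx : Function.Injective x) (hz : Function.Injective z)
    (hxz : ∀ i j, z i ≠ x j) :
    ∃ T : Set (Fin n → M), IsPreconnected T ∧
      T ⊆ {x : Fin n → M | Function.Injective x} ∧ x ∈ T ∧ z ∈ T := by
  classical
  set c : ℕ → (Fin n → M) := fun k j => if (j : ℕ) < k then z j else x j with hc
  have hcinj : ∀ k, Function.Injective (c k) := by
    intro k j j' h
    simp only [hc] at h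
    by_cases h1 : (j : ℕ) < k <;> by_cases h2 : (j' : ℕ) < k <;>
      simp [h1, h2] at h
    · exact hz h
    · exact absurd h (hxz j j')
    · exact absurd h.symm (hxz j' j)
    · exact hx h
  have key : ∀ k, k ≤ n → ∃ T : Set (Fin n → M), IsPreconnected T ∧
      T ⊆ {x : Fin n → M | Function.Injective x} ∧ x ∈ T ∧ c k ∈ T := by
    intro k
    induction k with
    | zero =>
      intro _
      refine ⟨{x}, isPreconnected_singleton, singleton_subset_iff.2 hx, mem_singleton _, ?_⟩
      have : c 0 = x := by
        funext j; simp [hc]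
      rw [this]
      exact mem_singleton _
    | succ k ih =>
      intro hk1
      obtain ⟨T, hT1, hT2, hT3, hT4⟩ := ih (Nat.le_of_succ_le hk1)
      set i : Fin n := ⟨k, hk1⟩ with hi
      have hb : ∀ j, j ≠ i → z i ≠ c k j := by
        intro j hj
        simp only [hc]
        by_cases h1 : (j : ℕ) < k
        · simp only [h1, if_true]
          intro h
          exact hj (hz h ▸ rfl)
        · simp only [h1, if_false]
          exact hxz i j
      obtain ⟨K, hK1, hK2, hK3, hK4⟩ := move_one hconn (hcinj k) i (z i) hb
      have hck1 : c (k + 1) = Function.update (c k) i (z i) := by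
        funext j
        by_cases hj : j = i
        · subst hj
          simp [hc, Function.update_self, hi]
        · rw [Function.update_of_ne hj]
          have : (j : ℕ) ≠ k := by
            intro h
            exact hj (Fin.ext h)
          simp only [hc]
          by_cases h1 : (j : ℕ) < k
          · simp [h1, Nat.lt_succ_of_lt h1]
          · have : ¬ ((j : ℕ) < k + 1) := by omega
            simp [h1, this]
      refine ⟨T ∪ K, hT1.union (c k) hT4 hK3 hK1, union_subset hT2 hK2,
        Or.inl hT3, Or.inr ?_⟩
      rw [hck1]
      exact hK4
  obtain ⟨T, h1, h2, h3, h4⟩ := key n le_rfl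
  refine ⟨T, h1, h2, h3, ?_⟩
  have : c n = z := by
    funext j; simp [hc, j.isLt]
  rwa [this] at h4

end Config

/-- For a connected Hausdorff topological manifold M of dimension d ≥ 2
(every point has a chart to ℝᵈ), the ordered configuration space of n distinct points,
as a subspace of Mⁿ, is connected. -/
theorem configuration_space_of_manifold_connected
    (d : ℕ) (hd : 2 ≤ d) (M : Type*) [TopologicalSpace M] [T2Space M] [ConnectedSpace M]
    [ChartedSpace (EuclideanSpace ℝ (Fin d)) M] (n : ℕ) (hn : 1 ≤ n) :
    IsConnected {x : Fin n → M | Function.Injective x} := by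
  classical
  have hconn : ∀ S : Set M, S.Finite → IsConnected Sᶜ := fun S hS =>
    compl_finite_isConnected d hd M hS
  have hinf : Infinite M := by
    by_contra h
    rw [not_infinite_iff_finite] at h
    obtain ⟨p, hp⟩ := (hconn univ finite_univ).nonempty
    exact hp (mem_univ p)
  constructor
  · refine ⟨fun j => Infinite.natEmbedding M j, ?_⟩
    intro a b hab
    exact Fin.val_injective ((Infinite.natEmbedding M).injective hab)
  · apply isPreconnected_of_forall_pair
    intro x hx y hy
    have hfin : (range x ∪ range y).Finite := (finite_range x).union (finite_range y)
    have hcinf : ((range x ∪ range y)ᶜ : Set M).Infinite := hfin.infinite_compl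
    have hinf2 : Infinite ↥((range x ∪ range y)ᶜ : Set M) := hcinf.to_subtype
    set e2 : Fin n ↪ ↥((range x ∪ range y)ᶜ : Set M) :=
      (Fin.valEmbedding).trans (Infinite.natEmbedding _) with he2
    set z : Fin n → M := fun j => (e2 j : M) with hzdef
    have hzinj : Function.Injective z := fun a b hab =>
      e2.injective (Subtype.val_injective hab)
    have hz_not : ∀ j, z j ∉ range x ∪ range y := fun j => (e2 j).2
    obtain ⟨T1, hT11, hT12, hT13, hT14⟩ := chain_lemma hconn hx hzinj
      (fun i j h => hz_not i (Or.inl ⟨j, h.symm⟩))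
    obtain ⟨T2, hT21, hT22, hT23, hT24⟩ := chain_lemma hconn hy hzinj
      (fun i j h => hz_not i (Or.inr ⟨j, h.symm⟩))
    exact ⟨T1 ∪ T2, union_subset hT12 hT22, Or.inl hT13, Or.inr hT23,
      hT11.union z hT14 hT24 hT21⟩
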